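/- Let C be a real circulant matrix and define Q = Y_n C̃, where C̃ = F Λ̃ F* is the unitary sign factor of C (assuming C nonsingular) and Y_n is the exchange matrix. Then Q is both symmetric and orthogonal, and Q commutes with |C| = F|Λ|F*. -/

import Mathlib

open Matrix Complex

/-- The exchange (anti-identity) matrix over `ℂ`. -/
def exchangeMatrixC (n : ℕ) : Matrix (Fin n) (Fin n) ℂ :=
  fun i j => if (i : ℕ) + (j : ℕ) + 1 = n then 1 else 0

/-- The unitary Fourier matrix `F = (ω^{jk}/√n)` with `ω = e^{-2πi/n}`. -/
noncomputable def fourierMatrix (n : ℕ) : Matrix (Fin n) (Fin n) ℂ :=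
  Matrix.of fun j k : Fin n =>
    Complex.exp (-(2 * (Real.pi : ℂ) * Complex.I * (j : ℕ) * (k : ℕ)) / n) /
      (Real.sqrt n : ℂ)

noncomputable def PmC (n : ℕ) : Matrix (Fin n) (Fin n) ℂ :=
  fun j k => if ((j : ℕ) + (k : ℕ)) % n = 0 then 1 else 0

lemma fourier_symm (n : ℕ) (j k : Fin n) : fourierMatrix n j k = fourierMatrix n k j := by
  simp only [fourierMatrix, Matrix.of_apply]
  congr 2
  ring

lemma fourier_conj (n : ℕ) (j k : Fin n) :
    (starRingEnd ℂ) (fourierMatrix n j k)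
      = Complex.exp ((2 * (Real.pi : ℂ) * Complex.I * (j : ℕ) * (k : ℕ)) / n)
          / (Real.sqrt n : ℂ) := by
  simp only [fourierMatrix, Matrix.of_apply, map_div₀, ← Complex.exp_conj,
    Complex.conj_ofReal]
  congr 2
  simp [map_neg, _root_.map_mul, map_ofNat, Complex.conj_I, Complex.conj_ofReal]

lemma fourier_conjT (n : ℕ) :
    (fourierMatrix n)ᴴ = (fourierMatrix n).map (starRingEnd ℂ) := by
  ext j k
  rw [Matrix.conjTranspose_apply, Matrix.map_apply, fourier_symm]
  rfl

lemma fourier_H_transpose (n : ℕ) : ((fourierMatrix n)ᴴ)ᵀ = (fourierMatrix n)ᴴ := by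
  ext j k
  rw [Matrix.transpose_apply, Matrix.conjTranspose_apply, Matrix.conjTranspose_apply,
    fourier_symm]

lemma sum_exp_aux (n : ℕ) (hn : 0 < n) (m : ℤ) :
    (∑ l : Fin n, Complex.exp (2 * (Real.pi : ℂ) * Complex.I * (l : ℕ) * (m : ℂ) / n))
      = if (n : ℤ) ∣ m then (n : ℂ) else 0 := by
  have hnC : (n : ℂ) ≠ 0 := Nat.cast_ne_zero.mpr hn.ne'
  set ζ := Complex.exp (2 * (Real.pi : ℂ) * Complex.I * (m : ℂ) / n) with hζdef
  have hterm : ∀ l : Fin n,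
      Complex.exp (2 * (Real.pi : ℂ) * Complex.I * (l : ℕ) * (m : ℂ) / n) = ζ ^ (l : ℕ) := by
    intro l
    rw [hζdef, ← Complex.exp_nat_mul]
    congr 1
    ring
  rw [Finset.sum_congr rfl (fun l _ => hterm l),
    Fin.sum_univ_eq_sum_range (fun i => ζ ^ i) n]
  by_cases hd : (n : ℤ) ∣ m
  · obtain ⟨c, rfl⟩ := hd
    have hζ : ζ = 1 := by
      rw [hζdef, show 2 * (Real.pi : ℂ) * Complex.I * (((n : ℤ) * c : ℤ) : ℂ) / n
          = (c : ℂ) * (2 * (Real.pi : ℂ) * Complex.I) by push_cast; field_simp]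
      exact Complex.exp_int_mul_two_pi_mul_I c
    simp [hζ, dvd_mul_right]
  · have hζn : ζ ^ n = 1 := by
      rw [hζdef, ← Complex.exp_nat_mul,
        show (n : ℂ) * (2 * (Real.pi : ℂ) * Complex.I * (m : ℂ) / n)
          = (m : ℂ) * (2 * (Real.pi : ℂ) * Complex.I) by field_simp]
      exact Complex.exp_int_mul_two_pi_mul_I m
    have hζ1 : ζ ≠ 1 := by
      intro h
      rw [hζdef, Complex.exp_eq_one_iff] at h
      obtain ⟨k, hk⟩ := h
      apply hd
      have h2πI : (2 * (Real.pi : ℂ) * Complex.I) ≠ 0 := by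
        simp [Real.pi_ne_zero, Complex.I_ne_zero, Complex.ofReal_ne_zero]
      have h2 : (m : ℂ) = (n : ℂ) * k := by
        field_simp at hk
        have h3 : (2 * (Real.pi : ℂ) * Complex.I) * (m : ℂ)
            = (2 * (Real.pi : ℂ) * Complex.I) * ((n : ℂ) * k) := by linear_combination (2 * (Real.pi : ℂ) * Complex.I) * hk
        exact mul_left_cancel₀ h2πI h3
      exact ⟨k, by exact_mod_cast h2⟩
    rw [geom_sum_eq hζ1, hζn]
    simp [hd]

lemma sqrt_mul_self_C (n : ℕ) : (Real.sqrt n : ℂ) * (Real.sqrt n : ℂ) = (n : ℂ) := by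
  rw [← Complex.ofReal_mul, Real.mul_self_sqrt (Nat.cast_nonneg n)]
  norm_cast

lemma fourier_unitary (n : ℕ) (hn : 0 < n) :
    (fourierMatrix n)ᴴ * fourierMatrix n = 1 := by
  have hnC : (n : ℂ) ≠ 0 := Nat.cast_ne_zero.mpr hn.ne'
  ext j k
  rw [Matrix.mul_apply]
  have hterm : ∀ l : Fin n, (fourierMatrix n)ᴴ j l * fourierMatrix n l k
      = Complex.exp (2 * (Real.pi : ℂ) * Complex.I * (l : ℕ)
          * ((((j : ℕ) : ℤ) - ((k : ℕ) : ℤ) : ℤ) : ℂ) / n) / n := by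
    intro l
    rw [Matrix.conjTranspose_apply, Complex.star_def, fourier_conj]
    show _ * (Complex.exp (-(2 * (Real.pi : ℂ) * Complex.I * (l : ℕ) * (k : ℕ)) / n) /
      (Real.sqrt n : ℂ)) = _
    rw [div_mul_div_comm, ← Complex.exp_add, sqrt_mul_self_C]
    congr 2
    push_cast
    ring
  rw [Finset.sum_congr rfl (fun l _ => hterm l), ← Finset.sum_div,
    sum_exp_aux n hn (((j : ℕ) : ℤ) - ((k : ℕ) : ℤ))]
  rw [Matrix.one_apply]
  by_cases h : j = k
  · subst h
    simp [hnC]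
  · have hnd : ¬ (n : ℤ) ∣ (((j : ℕ) : ℤ) - ((k : ℕ) : ℤ)) := by
      intro hdvd
      have hj := j.isLt
      have hk := k.isLt
      have h0 := Int.eq_zero_of_dvd_of_natAbs_lt_natAbs hdvd (by omega)
      exact h (Fin.ext (by omega))
    simp [hnd, h]

lemma fourier_unitary' (n : ℕ) (hn : 0 < n) :
    fourierMatrix n * (fourierMatrix n)ᴴ = 1 :=
  mul_eq_one_comm.mp (fourier_unitary n hn)

lemma fourier_sq (n : ℕ) (hn : 0 < n) :
    fourierMatrix n * fourierMatrix n = PmC n := by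
  have hnC : (n : ℂ) ≠ 0 := Nat.cast_ne_zero.mpr hn.ne'
  ext j k
  rw [Matrix.mul_apply]
  have hterm : ∀ l : Fin n, fourierMatrix n j l * fourierMatrix n l k
      = Complex.exp (2 * (Real.pi : ℂ) * Complex.I * (l : ℕ)
          * ((-(((j : ℕ) : ℤ) + ((k : ℕ) : ℤ)) : ℤ) : ℂ) / n) / n := by
    intro l
    show (Complex.exp (-(2 * (Real.pi : ℂ) * Complex.I * (j : ℕ) * (l : ℕ)) / n) /
        (Real.sqrt n : ℂ)) *
      (Complex.exp (-(2 * (Real.pi : ℂ) * Complex.I * (l : ℕ) * (k : ℕ)) / n) /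
        (Real.sqrt n : ℂ)) = _
    rw [div_mul_div_comm, ← Complex.exp_add, sqrt_mul_self_C]
    congr 2
    push_cast
    ring
  rw [Finset.sum_congr rfl (fun l _ => hterm l), ← Finset.sum_div,
    sum_exp_aux n hn (-(((j : ℕ) : ℤ) + ((k : ℕ) : ℤ)))]
  show _ = if ((j : ℕ) + (k : ℕ)) % n = 0 then (1 : ℂ) else 0
  by_cases h : ((j : ℕ) + (k : ℕ)) % n = 0
  · have hdvd : (n : ℤ) ∣ (-(((j : ℕ) : ℤ) + ((k : ℕ) : ℤ))) := by
      rw [dvd_neg]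
      exact_mod_cast Int.natCast_dvd_natCast.mpr (Nat.dvd_of_mod_eq_zero h)
    rw [if_pos hdvd, if_pos h, div_self hnC]
  · have hnd : ¬ (n : ℤ) ∣ (-(((j : ℕ) : ℤ) + ((k : ℕ) : ℤ))) := by
      rw [dvd_neg]
      intro hdvd
      have hnat : n ∣ ((j : ℕ) + (k : ℕ)) := by exact_mod_cast hdvd
      exact h (Nat.mod_eq_zero_of_dvd hnat)
    rw [if_neg hnd, zero_div, if_neg h]

lemma fourier_H_sq (n : ℕ) (hn : 0 < n) :
    (fourierMatrix n)ᴴ * (fourierMatrix n)ᴴ = PmC n := by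
  rw [fourier_conjT, ← Matrix.map_mul, fourier_sq n hn]
  ext j k
  simp [PmC, Matrix.map_apply, apply_ite]

lemma exchange_mul_fourier (n : ℕ) (hn : 0 < n) :
    exchangeMatrixC n * fourierMatrix n
      = (fourierMatrix n)ᴴ * Matrix.diagonal
          (fun k : Fin n => Complex.exp (2 * (Real.pi : ℂ) * Complex.I * (k : ℕ) / n)) := by
  have hnC : (n : ℂ) ≠ 0 := Nat.cast_ne_zero.mpr hn.ne'
  ext i k
  rw [Matrix.mul_apply, Matrix.mul_diagonal]
  have hi : (i : ℕ) < n := i.isLt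
  set l0 : Fin n := ⟨n - 1 - (i : ℕ), by omega⟩ with hl0def
  rw [Finset.sum_eq_single l0]
  · have hc : (i : ℕ) + (l0 : ℕ) + 1 = n := by
      show (i : ℕ) + (n - 1 - (i : ℕ)) + 1 = n
      omega
    show (if (i : ℕ) + (l0 : ℕ) + 1 = n then (1 : ℂ) else 0) * fourierMatrix n l0 k = _
    rw [if_pos hc, one_mul, Matrix.conjTranspose_apply, Complex.star_def, fourier_conj]
    show Complex.exp (-(2 * (Real.pi : ℂ) * Complex.I * ((l0 : ℕ) : ℂ) * ((k : ℕ) : ℂ)) / n)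
        / (Real.sqrt n : ℂ) = _
    have hl0 : ((l0 : ℕ) : ℂ) = (n : ℂ) - 1 - ((i : ℕ) : ℂ) := by
      show (((n - 1 - (i : ℕ) : ℕ)) : ℂ) = _
      have h1 : n - 1 - (i : ℕ) = n - (1 + (i : ℕ)) := by omega
      have h2 : 1 + (i : ℕ) ≤ n := by omega
      rw [h1, Nat.cast_sub h2]
      push_cast
      ring
    have hsplit : -(2 * (Real.pi : ℂ) * Complex.I * ((l0 : ℕ) : ℂ) * ((k : ℕ) : ℂ)) / n
        = 2 * (Real.pi : ℂ) * Complex.I * ((k : ℕ) : ℂ) * ((i : ℕ) : ℂ) / n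
          + 2 * (Real.pi : ℂ) * Complex.I * ((k : ℕ) : ℂ) / n
          + ((-((k : ℕ) : ℤ) : ℤ) : ℂ) * (2 * (Real.pi : ℂ) * Complex.I) := by
      rw [hl0]
      push_cast
      field_simp
      ring
    rw [hsplit, Complex.exp_add, Complex.exp_add,
      Complex.exp_int_mul_two_pi_mul_I (-((k : ℕ) : ℤ)), mul_one]
    ring
  · intro l _ hne
    show (if (i : ℕ) + (l : ℕ) + 1 = n then (1 : ℂ) else 0) * fourierMatrix n l k = 0
    rw [if_neg, zero_mul]
    intro hc
    exact hne (Fin.ext (by show (l : ℕ) = n - 1 - (i : ℕ); omega))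
  · intro h
    exact absurd (Finset.mem_univ l0) h
/-- For a nonsingular real circulant `C = F Λ Fᴴ`, the matrix `Q = Y C̃`, where
`C̃ = F (Λ/|Λ|) Fᴴ` is the unitary sign factor of `C`, is symmetric and
orthogonal, and commutes with `|C| = F |Λ| Fᴴ`. -/
theorem stmt13 (n : ℕ) (C : Matrix (Fin n) (Fin n) ℂ) (Λ : Fin n → ℂ)
    (hreal : ∃ v : Fin n → ℝ, C = (Matrix.circulant v).map (Complex.ofReal))
    (hdecomp : C = fourierMatrix n * Matrix.diagonal Λ * (fourierMatrix n)ᴴ)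
    (hns : ∀ j, Λ j ≠ 0) :
    (exchangeMatrixC n *
        (fourierMatrix n * Matrix.diagonal (fun j => Λ j / ((‖Λ j‖ : ℝ) : ℂ)) *
          (fourierMatrix n)ᴴ))ᵀ =
      exchangeMatrixC n *
        (fourierMatrix n * Matrix.diagonal (fun j => Λ j / ((‖Λ j‖ : ℝ) : ℂ)) *
          (fourierMatrix n)ᴴ) ∧
    (exchangeMatrixC n *
        (fourierMatrix n * Matrix.diagonal (fun j => Λ j / ((‖Λ j‖ : ℝ) : ℂ)) *
          (fourierMatrix n)ᴴ))ᵀ *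
      (exchangeMatrixC n *
        (fourierMatrix n * Matrix.diagonal (fun j => Λ j / ((‖Λ j‖ : ℝ) : ℂ)) *
          (fourierMatrix n)ᴴ)) = 1 ∧
    (exchangeMatrixC n *
        (fourierMatrix n * Matrix.diagonal (fun j => Λ j / ((‖Λ j‖ : ℝ) : ℂ)) *
          (fourierMatrix n)ᴴ)) *
      (fourierMatrix n * Matrix.diagonal (fun j => ((‖Λ j‖ : ℝ) : ℂ)) *
        (fourierMatrix n)ᴴ) =
    (fourierMatrix n * Matrix.diagonal (fun j => ((‖Λ j‖ : ℝ) : ℂ)) *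
        (fourierMatrix n)ᴴ) *
      (exchangeMatrixC n *
        (fourierMatrix n * Matrix.diagonal (fun j => Λ j / ((‖Λ j‖ : ℝ) : ℂ)) *
          (fourierMatrix n)ᴴ)) := by
  rcases Nat.eq_zero_or_pos n with hn | hn
  · subst hn
    refine ⟨?_, ?_, ?_⟩ <;> · ext i j; exact i.elim0
  have hnC : (n : ℂ) ≠ 0 := Nat.cast_ne_zero.mpr hn.ne'
  -- abbreviations
  set F : Matrix (Fin n) (Fin n) ℂ := fourierMatrix n with hFdef
  set G : Matrix (Fin n) (Fin n) ℂ := Fᴴ with hGdef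
  set Y : Matrix (Fin n) (Fin n) ℂ := exchangeMatrixC n with hYdef
  set Λt : Fin n → ℂ := fun j => Λ j / ((‖Λ j‖ : ℝ) : ℂ) with hΛt
  set A : Fin n → ℂ := fun j => ((‖Λ j‖ : ℝ) : ℂ) with hA
  set μ : Fin n → ℂ :=
    fun k => Complex.exp (2 * (Real.pi : ℂ) * Complex.I * (k : ℕ) / n) * Λt k with hμ
  -- base facts
  have hFHF : G * F = 1 := fourier_unitary n hn
  have hFFH : F * G = 1 := fourier_unitary' n hn
  have hFF : F * F = PmC n := fourier_sq n hn
  have hGG : G * G = PmC n := fourier_H_sq n hn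
  have hYF : Y * F = G * Matrix.diagonal
      (fun k : Fin n => Complex.exp (2 * (Real.pi : ℂ) * Complex.I * (k : ℕ) / n)) :=
    exchange_mul_fourier n hn
  have hGT : Gᵀ = G := fourier_H_transpose n
  -- uniqueness of the partner index
  have huniq : ∀ (j k l : Fin n), ((j : ℕ) + (k : ℕ)) % n = 0 →
      ((j : ℕ) + (l : ℕ)) % n = 0 → k = l := by
    intro j k l h1 h2
    have hj := j.isLt; have hk := k.isLt; have hl := l.isLt
    obtain ⟨c, hc⟩ := Nat.dvd_of_mod_eq_zero h1
    obtain ⟨d, hd⟩ := Nat.dvd_of_mod_eq_zero h2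
    have hc2 : c < 2 := by
      by_contra hcon
      push_neg at hcon
      have : 2 * n ≤ n * c := by
        calc 2 * n = n * 2 := by ring
        _ ≤ n * c := Nat.mul_le_mul_left n hcon
      omega
    have hd2 : d < 2 := by
      by_contra hcon
      push_neg at hcon
      have : 2 * n ≤ n * d := by
        calc 2 * n = n * 2 := by ring
        _ ≤ n * d := Nat.mul_le_mul_left n hcon
      omega
    interval_cases c <;> interval_cases d <;> exact Fin.ext (by omega)
  have hcases : ∀ (j k : Fin n), ((j : ℕ) + (k : ℕ)) % n = 0 →
      (j : ℕ) + (k : ℕ) = 0 ∨ (j : ℕ) + (k : ℕ) = n := by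
    intro j k h1
    have hj := j.isLt; have hk := k.isLt
    obtain ⟨c, hc⟩ := Nat.dvd_of_mod_eq_zero h1
    have hc2 : c < 2 := by
      by_contra hcon
      push_neg at hcon
      have : 2 * n ≤ n * c := by
        calc 2 * n = n * 2 := by ring
        _ ≤ n * c := Nat.mul_le_mul_left n hcon
      omega
    interval_cases c <;> omega
  -- reality of C
  have hCreal : C.map (starRingEnd ℂ) = C := by
    obtain ⟨v, rfl⟩ := hreal
    ext i j
    simp [Matrix.map_apply, Complex.conj_ofReal]
  have hFmap : F.map (starRingEnd ℂ) = G := (fourier_conjT n).symm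
  have hGmap : G.map (starRingEnd ℂ) = F := by
    ext j k
    rw [Matrix.map_apply]
    show (starRingEnd ℂ) (Fᴴ j k) = F j k
    rw [Matrix.conjTranspose_apply, Complex.star_def, Complex.conj_conj]
    exact fourier_symm n k j
  have hC2 : C = G * Matrix.diagonal (fun j => (starRingEnd ℂ) (Λ j)) * F := by
    conv_lhs => rw [← hCreal]
    rw [hdecomp, Matrix.map_mul, Matrix.map_mul, hFmap, hGmap,
      Matrix.diagonal_map (map_zero _)]
  have h3 : Matrix.diagonal (fun j => (starRingEnd ℂ) (Λ j))
      = PmC n * Matrix.diagonal Λ * PmC n := by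
    have h := hC2.symm.trans hdecomp
    have e1 : F * (G * Matrix.diagonal (fun j => (starRingEnd ℂ) (Λ j)) * F) * G
        = Matrix.diagonal (fun j => (starRingEnd ℂ) (Λ j)) := by
      rw [show F * (G * Matrix.diagonal (fun j => (starRingEnd ℂ) (Λ j)) * F) * G
          = (F * G) * Matrix.diagonal (fun j => (starRingEnd ℂ) (Λ j)) * (F * G) from by
        noncomm_ring, hFFH, one_mul, mul_one]
    have e2 : F * (F * Matrix.diagonal Λ * G) * G = PmC n * Matrix.diagonal Λ * PmC n := by
      rw [show F * (F * Matrix.diagonal Λ * G) * G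
          = (F * F) * Matrix.diagonal Λ * (G * G) from by noncomm_ring, hFF, hGG]
    rw [← e1, h, e2]
  have hsym : ∀ j k : Fin n, ((j : ℕ) + (k : ℕ)) % n = 0 →
      Λ k = (starRingEnd ℂ) (Λ j) := by
    intro j k hjk
    have h5 : Matrix.diagonal (fun j => (starRingEnd ℂ) (Λ j)) j j
        = (PmC n * Matrix.diagonal Λ * PmC n) j j := by rw [h3]
    rw [Matrix.diagonal_apply_eq, Matrix.mul_apply] at h5
    simp only [Matrix.mul_diagonal] at h5
    rw [Finset.sum_eq_single k] at h5
    · have hkj : ((k : ℕ) + (j : ℕ)) % n = 0 := by rw [Nat.add_comm]; exact hjk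
      rw [h5]
      show Λ k = PmC n j k * Λ k * PmC n k j
      simp [PmC, hjk, hkj]
    · intro l _ hlk
      have hno : ¬ ((j : ℕ) + (l : ℕ)) % n = 0 := fun hc => hlk (huniq j l k hc hjk)
      show PmC n j l * Λ l * PmC n l j = 0
      simp [PmC, hno]
    · intro hk
      exact absurd (Finset.mem_univ k) hk
  have habs : ∀ j k : Fin n, ((j : ℕ) + (k : ℕ)) % n = 0 → A k = A j := by
    intro j k hjk
    simp only [hA]
    rw [hsym j k hjk, Complex.norm_conj]
  have hunit : ∀ j k : Fin n, ((j : ℕ) + (k : ℕ)) % n = 0 → Λt j * Λt k = 1 := by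
    intro j k hjk
    simp only [hΛt]
    rw [hsym j k hjk, Complex.norm_conj, div_mul_div_comm, Complex.mul_conj,
      ← Complex.ofReal_mul, ← pow_two, Complex.sq_norm]
    exact div_self (Complex.ofReal_ne_zero.mpr (Complex.normSq_pos.mpr (hns j)).ne')
  have hexp1 : ∀ j k : Fin n, ((j : ℕ) + (k : ℕ)) % n = 0 →
      Complex.exp (2 * (Real.pi : ℂ) * Complex.I * (j : ℕ) / n)
        * Complex.exp (2 * (Real.pi : ℂ) * Complex.I * (k : ℕ) / n) = 1 := by
    intro j k hjk
    rw [← Complex.exp_add,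
      show 2 * (Real.pi : ℂ) * Complex.I * (j : ℕ) / n
          + 2 * (Real.pi : ℂ) * Complex.I * (k : ℕ) / n
        = 2 * (Real.pi : ℂ) * Complex.I * (((j : ℕ) + (k : ℕ) : ℕ) : ℂ) / n from by
        push_cast; ring]
    rcases hcases j k hjk with h0 | h0
    · rw [h0]
      simp
    · rw [h0, mul_div_assoc, div_self hnC, mul_one]
      exact Complex.exp_two_pi_mul_I
  have hμunit : ∀ j k : Fin n, ((j : ℕ) + (k : ℕ)) % n = 0 → μ j * μ k = 1 := by
    intro j k hjk
    simp only [hμ]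
    rw [show Complex.exp (2 * (Real.pi : ℂ) * Complex.I * (j : ℕ) / n) * Λt j
          * (Complex.exp (2 * (Real.pi : ℂ) * Complex.I * (k : ℕ) / n) * Λt k)
        = Complex.exp (2 * (Real.pi : ℂ) * Complex.I * (j : ℕ) / n)
            * Complex.exp (2 * (Real.pi : ℂ) * Complex.I * (k : ℕ) / n)
          * (Λt j * Λt k) from by ring,
      hexp1 j k hjk, hunit j k hjk, one_mul]
  -- the main rewriting
  have hQ : Y * (F * Matrix.diagonal Λt * G) = G * Matrix.diagonal μ * G := by
    calc Y * (F * Matrix.diagonal Λt * G) = (Y * F) * Matrix.diagonal Λt * G := by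
          noncomm_ring
    _ = (G * Matrix.diagonal
          (fun k : Fin n => Complex.exp (2 * (Real.pi : ℂ) * Complex.I * (k : ℕ) / n)))
          * Matrix.diagonal Λt * G := by rw [hYF]
    _ = G * (Matrix.diagonal
          (fun k : Fin n => Complex.exp (2 * (Real.pi : ℂ) * Complex.I * (k : ℕ) / n))
          * Matrix.diagonal Λt) * G := by noncomm_ring
    _ = G * Matrix.diagonal μ * G := by rw [Matrix.diagonal_mul_diagonal]
  have part1 : (Y * (F * Matrix.diagonal Λt * G))ᵀ = Y * (F * Matrix.diagonal Λt * G) := by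
    rw [hQ, Matrix.transpose_mul, Matrix.transpose_mul, Matrix.diagonal_transpose, hGT,
      ← Matrix.mul_assoc]
  have claim2 : Matrix.diagonal μ * PmC n * Matrix.diagonal μ = PmC n := by
    ext j k
    rw [Matrix.mul_diagonal, Matrix.diagonal_mul]
    by_cases h : ((j : ℕ) + (k : ℕ)) % n = 0
    · show μ j * (if _ then (1:ℂ) else 0) * μ k = _
      rw [if_pos h, mul_one]
      show μ j * μ k = PmC n j k
      rw [hμunit j k h]
      simp [PmC, h]
    · show μ j * (if _ then (1:ℂ) else 0) * μ k = _
      rw [if_neg h, mul_zero, zero_mul]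
      simp [PmC, h]
  have part2 : (Y * (F * Matrix.diagonal Λt * G))ᵀ * (Y * (F * Matrix.diagonal Λt * G)) = 1 := by
    rw [part1, hQ]
    calc (G * Matrix.diagonal μ * G) * (G * Matrix.diagonal μ * G)
        = (G * Matrix.diagonal μ) * (G * G) * (Matrix.diagonal μ * G) := by noncomm_ring
    _ = (G * Matrix.diagonal μ) * PmC n * (Matrix.diagonal μ * G) := by rw [hGG]
    _ = G * (Matrix.diagonal μ * PmC n * Matrix.diagonal μ) * G := by noncomm_ring
    _ = G * PmC n * G := by rw [claim2]
    _ = G * (F * F) * G := by rw [hFF]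
    _ = (G * F) * (F * G) := by noncomm_ring
    _ = 1 := by rw [hFHF, hFFH, one_mul]
  have claim3 : Matrix.diagonal A * PmC n = PmC n * Matrix.diagonal A := by
    ext j k
    rw [Matrix.diagonal_mul, Matrix.mul_diagonal]
    by_cases h : ((j : ℕ) + (k : ℕ)) % n = 0
    · have hab := habs j k h
      simp [PmC, h, hab]
    · simp [PmC, h]
  have hFP : F * PmC n = G := by rw [← hGG, ← Matrix.mul_assoc, hFFH, one_mul]
  have part3 : (Y * (F * Matrix.diagonal Λt * G)) * (F * Matrix.diagonal A * G)
      = (F * Matrix.diagonal A * G) * (Y * (F * Matrix.diagonal Λt * G)) := by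
    rw [hQ]
    have hLHS : (G * Matrix.diagonal μ * G) * (F * Matrix.diagonal A * G)
        = F * (PmC n * Matrix.diagonal (fun j => μ j * A j)) * G := by
      calc (G * Matrix.diagonal μ * G) * (F * Matrix.diagonal A * G)
          = (G * Matrix.diagonal μ) * (G * F) * (Matrix.diagonal A * G) := by noncomm_ring
      _ = (G * Matrix.diagonal μ) * 1 * (Matrix.diagonal A * G) := by rw [hFHF]
      _ = G * (Matrix.diagonal μ * Matrix.diagonal A) * G := by noncomm_ring
      _ = G * Matrix.diagonal (fun j => μ j * A j) * G := by rw [Matrix.diagonal_mul_diagonal]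
      _ = (F * PmC n) * Matrix.diagonal (fun j => μ j * A j) * G := by rw [hFP]
      _ = F * (PmC n * Matrix.diagonal (fun j => μ j * A j)) * G := by noncomm_ring
    have hRHS : (F * Matrix.diagonal A * G) * (G * Matrix.diagonal μ * G)
        = F * (PmC n * Matrix.diagonal (fun j => μ j * A j)) * G := by
      calc (F * Matrix.diagonal A * G) * (G * Matrix.diagonal μ * G)
          = (F * Matrix.diagonal A) * (G * G) * (Matrix.diagonal μ * G) := by noncomm_ring
      _ = (F * Matrix.diagonal A) * PmC n * (Matrix.diagonal μ * G) := by rw [hGG]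
      _ = F * ((Matrix.diagonal A * PmC n) * Matrix.diagonal μ) * G := by noncomm_ring
      _ = F * ((PmC n * Matrix.diagonal A) * Matrix.diagonal μ) * G := by rw [claim3]
      _ = F * (PmC n * (Matrix.diagonal A * Matrix.diagonal μ)) * G := by noncomm_ring
      _ = F * (PmC n * Matrix.diagonal (fun j => A j * μ j)) * G := by
            rw [Matrix.diagonal_mul_diagonal]
      _ = F * (PmC n * Matrix.diagonal (fun j => μ j * A j)) * G := by
            rw [show (fun j => A j * μ j) = (fun j => μ j * A j) from
              funext fun j => mul_comm _ _]
    rw [hLHS, hRHS]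
  exact ⟨part1, part2, part3⟩
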